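/- Let c > 0 and let f, ψ : (0,1) → ℝ be measurable with c ≤ f(r) ≤ ψ(r) for a.e. r, and suppose f is a.e. nonincreasing: for a.e. r ∈ (0,1) and a.e. x ∈ (0,r], f(r) ≤ f(x). Then, with all quantities valued in [0,∞], ∫₀¹ r³ ψ(r)² / (∫₀^r 2s ψ(s) ds) dr + ∫₀¹ (1/r) (∫₀^r 2s(ψ(s) − f(s)) ds) dr ≥ ∫₀¹ r³ f(r)² / (∫₀^r 2s f(s) ds) dr. -/

import Mathlib

noncomputable section

open Real MeasureTheory
open scoped ENNReal


lemma aux_int (r k : ℝ) (hr : 0 < r) (hk : 0 ≤ k) :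
    ∫⁻ s in Set.Ioo (0:ℝ) r, ENNReal.ofReal (2 * s * k) = ENNReal.ofReal (r ^ 2 * k) := by
  rw [← ofReal_integral_eq_lintegral_ofReal]
  · congr 1
    rw [← integral_Ioc_eq_integral_Ioo, ← intervalIntegral.integral_of_le hr.le]
    have h : (∫ s in (0:ℝ)..r, 2 * s * k) = ∫ s in (0:ℝ)..r, (2 * k) * s := by
      congr 1; funext s; ring
    rw [h, intervalIntegral.integral_const_mul, integral_id]
    ring
  · have : Continuous fun s : ℝ => 2 * s * k := by continuity
    exact this.integrableOn_Ioc.mono_set Set.Ioo_subset_Ioc_self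
  · filter_upwards [ae_restrict_mem measurableSet_Ioo] with s hs
    have : (0:ℝ) < s := hs.1
    positivity

lemma aux_real (r fr psr A B D : ℝ) (hr : 0 < r) (hfr : 0 < fr) (hψ : fr ≤ psr)
    (hA : r ^ 2 * fr ≤ A) (hAB : A ≤ B) (hBAD : B ≤ A + D) :
    r ^ 3 * fr ^ 2 / A ≤ r ^ 3 * psr ^ 2 / B + D / r := by
  have hA0 : 0 < A := lt_of_lt_of_le (by positivity) hA
  have hB0 : 0 < B := lt_of_lt_of_le hA0 hAB
  rw [div_add_div _ _ hB0.ne' hr.ne', div_le_div_iff₀ hA0 (by positivity)]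
  have hprod : (r ^ 2 * fr) * (r ^ 2 * fr) ≤ A * B :=
    mul_le_mul hA (hA.trans hAB) (by positivity) hA0.le
  have hψ2 : fr * fr ≤ psr * psr := mul_self_le_mul_self hfr.le hψ
  nlinarith [mul_nonneg (mul_nonneg hA0.le hB0.le) (show (0:ℝ) ≤ A + D - B by linarith),
    mul_nonneg (sub_nonneg.2 hprod) (sub_nonneg.2 hAB),
    mul_nonneg (mul_nonneg (sub_nonneg.2 hψ2) hA0.le) (by positivity : (0:ℝ) ≤ r ^ 4)]

/-- with all quantities valued in `[0,∞]`, if `c ≤ f ≤ ψ` a.e. on `(0,1)` and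
`f` is a.e. nonincreasing, then
`∫₀¹ r³ψ²/(∫₀ʳ 2sψ) dr + ∫₀¹ (1/r)(∫₀ʳ 2s(ψ−f)) dr ≥ ∫₀¹ r³f²/(∫₀ʳ 2sf) dr`. -/
theorem stmt15 (c : ℝ) (hc : 0 < c) (f ψ : ℝ → ℝ)
    (hfm : Measurable f) (hψm : Measurable ψ)
    (hbound : ∀ᵐ r ∂(volume.restrict (Set.Ioo (0 : ℝ) 1)), c ≤ f r ∧ f r ≤ ψ r)
    (hdec : ∀ᵐ r ∂(volume.restrict (Set.Ioo (0 : ℝ) 1)),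
      ∀ᵐ x ∂(volume.restrict (Set.Ioc (0 : ℝ) r)), f r ≤ f x) :
    (∫⁻ r in Set.Ioo (0 : ℝ) 1,
        ENNReal.ofReal (r ^ 3 * (ψ r) ^ 2)
          / ∫⁻ s in Set.Ioo (0 : ℝ) r, ENNReal.ofReal (2 * s * ψ s))
      + (∫⁻ r in Set.Ioo (0 : ℝ) 1,
          (∫⁻ s in Set.Ioo (0 : ℝ) r, ENNReal.ofReal (2 * s * (ψ s - f s)))
            / ENNReal.ofReal r)
    ≥ ∫⁻ r in Set.Ioo (0 : ℝ) 1,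
        ENNReal.ofReal (r ^ 3 * (f r) ^ 2)
          / ∫⁻ s in Set.Ioo (0 : ℝ) r, ENNReal.ofReal (2 * s * f s) := by
  have hGmono : Monotone fun r : ℝ =>
      ∫⁻ s in Set.Ioo (0:ℝ) r, ENNReal.ofReal (2 * s * ψ s) :=
    fun x y hxy => lintegral_mono' (Measure.restrict_mono (Set.Ioo_subset_Ioo le_rfl hxy) le_rfl) le_rfl
  have hXmeas : Measurable fun r : ℝ =>
      ENNReal.ofReal (r ^ 3 * (ψ r) ^ 2)
        / ∫⁻ s in Set.Ioo (0:ℝ) r, ENNReal.ofReal (2 * s * ψ s) :=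
    (((measurable_id.pow_const 3).mul (hψm.pow_const 2)).ennreal_ofReal).div hGmono.measurable
  -- pointwise a.e. inequality
  have key : ∀ᵐ r ∂(volume.restrict (Set.Ioo (0 : ℝ) 1)),
      ENNReal.ofReal (r ^ 3 * (f r) ^ 2)
          / (∫⁻ s in Set.Ioo (0 : ℝ) r, ENNReal.ofReal (2 * s * f s))
      ≤ ENNReal.ofReal (r ^ 3 * (ψ r) ^ 2)
          / (∫⁻ s in Set.Ioo (0 : ℝ) r, ENNReal.ofReal (2 * s * ψ s))
        + (∫⁻ s in Set.Ioo (0 : ℝ) r, ENNReal.ofReal (2 * s * (ψ s - f s)))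
            / ENNReal.ofReal r := by
    filter_upwards [hbound, hdec, ae_restrict_mem measurableSet_Ioo] with r hbr hdr hr
    set F := ∫⁻ s in Set.Ioo (0 : ℝ) r, ENNReal.ofReal (2 * s * f s) with hFdef
    set G := ∫⁻ s in Set.Ioo (0 : ℝ) r, ENNReal.ofReal (2 * s * ψ s) with hGdef
    set D := ∫⁻ s in Set.Ioo (0 : ℝ) r, ENNReal.ofReal (2 * s * (ψ s - f s)) with hDdef
    have hr0 : 0 < r := hr.1
    have haes : ∀ᵐ s ∂(volume.restrict (Set.Ioo (0:ℝ) r)), c ≤ f s ∧ f s ≤ ψ s :=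
      ae_restrict_of_ae_restrict_of_subset (Set.Ioo_subset_Ioo le_rfl hr.2.le) hbound
    have hdes : ∀ᵐ s ∂(volume.restrict (Set.Ioo (0:ℝ) r)), f r ≤ f s :=
      ae_restrict_of_ae_restrict_of_subset Set.Ioo_subset_Ioc_self hdr
    -- lower bound on F
    have hFlow : ENNReal.ofReal (r ^ 2 * f r) ≤ F := by
      rw [← aux_int r (f r) hr0 (hc.le.trans hbr.1)]
      refine lintegral_mono_ae ?_
      filter_upwards [hdes, ae_restrict_mem measurableSet_Ioo] with s hs hsm
      exact ENNReal.ofReal_le_ofReal (by nlinarith [hsm.1])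
    -- F ≤ G
    have hFG : F ≤ G := by
      refine lintegral_mono_ae ?_
      filter_upwards [haes, ae_restrict_mem measurableSet_Ioo] with s hs hsm
      exact ENNReal.ofReal_le_ofReal (by nlinarith [hsm.1, hs.2])
    -- G ≤ F + D
    have hGFD : G ≤ F + D := by
      calc G ≤ ∫⁻ s in Set.Ioo (0:ℝ) r,
            (ENNReal.ofReal (2 * s * f s) + ENNReal.ofReal (2 * s * (ψ s - f s))) := by
            refine lintegral_mono fun s => ?_
            have h : 2 * s * ψ s = 2 * s * f s + 2 * s * (ψ s - f s) := by ring
            rw [h]; exact ENNReal.ofReal_add_le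
        _ = F + D := lintegral_add_left
            (((measurable_const.mul measurable_id).mul hfm).ennreal_ofReal) _
    by_cases hFtop : F = ∞
    · rw [hFtop, ENNReal.div_top]; exact zero_le
    by_cases hDtop : D = ∞
    · rw [hDtop, ENNReal.top_div_of_ne_top ENNReal.ofReal_ne_top, add_top]; exact le_top
    have hGtop : G ≠ ∞ := by
      intro h; rw [h] at hGFD
      exact (ENNReal.add_ne_top.2 ⟨hFtop, hDtop⟩) (top_le_iff.mp hGFD)
    set A := F.toReal
    set B := G.toReal
    set Dr := D.toReal
    have hA : r ^ 2 * f r ≤ A := by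
      rw [← ENNReal.ofReal_le_iff_le_toReal hFtop] at *
      exact hFlow
    have hA0 : 0 < A := lt_of_lt_of_le (by have := hc.trans_le hbr.1; positivity) hA
    have hAB : A ≤ B := ENNReal.toReal_mono hGtop hFG
    have hBAD : B ≤ A + Dr := by
      have := ENNReal.toReal_mono (ENNReal.add_ne_top.2 ⟨hFtop, hDtop⟩) hGFD
      rwa [ENNReal.toReal_add hFtop hDtop] at this
    have hreal : r ^ 3 * (f r) ^ 2 / A ≤ r ^ 3 * (ψ r) ^ 2 / B + Dr / r :=
      aux_real r (f r) (ψ r) A B Dr hr0 (hc.trans_le hbr.1) hbr.2 hA hAB hBAD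
    have hB0 : 0 < B := lt_of_lt_of_le hA0 hAB
    have hDr0 : 0 ≤ Dr := ENNReal.toReal_nonneg
    calc ENNReal.ofReal (r ^ 3 * (f r) ^ 2) / F
        = ENNReal.ofReal (r ^ 3 * (f r) ^ 2 / A) := by
          rw [ENNReal.ofReal_div_of_pos hA0, ENNReal.ofReal_toReal hFtop]
      _ ≤ ENNReal.ofReal (r ^ 3 * (ψ r) ^ 2 / B + Dr / r) := ENNReal.ofReal_le_ofReal hreal
      _ = ENNReal.ofReal (r ^ 3 * (ψ r) ^ 2) / G + D / ENNReal.ofReal r := by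
          rw [ENNReal.ofReal_add (by positivity) (by positivity),
            ENNReal.ofReal_div_of_pos hB0, ENNReal.ofReal_div_of_pos hr0,
            ENNReal.ofReal_toReal hGtop, ENNReal.ofReal_toReal hDtop]
  calc (∫⁻ r in Set.Ioo (0 : ℝ) 1,
        ENNReal.ofReal (r ^ 3 * (f r) ^ 2)
          / ∫⁻ s in Set.Ioo (0 : ℝ) r, ENNReal.ofReal (2 * s * f s))
      ≤ ∫⁻ r in Set.Ioo (0 : ℝ) 1,
        (ENNReal.ofReal (r ^ 3 * (ψ r) ^ 2)
            / (∫⁻ s in Set.Ioo (0 : ℝ) r, ENNReal.ofReal (2 * s * ψ s))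
          + (∫⁻ s in Set.Ioo (0 : ℝ) r, ENNReal.ofReal (2 * s * (ψ s - f s)))
              / ENNReal.ofReal r) := lintegral_mono_ae key
    _ = _ := lintegral_add_left hXmeas _
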